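/- arXiv:2404.16750 — 4 statements merged into one kernel-verified Lean document; each statement's English description precedes it below -/
import Mathlib

section
/- DSW fitting, harmonic edge: fix u₊ > 0 and define k : [u₊, ∞) → ℝ by k(ū) = arccos( (2u₊ − ū)/ū ). Then k(u₊) = 0, k(ū) ∈ (0, π) for all ū > u₊, and for every ū > u₊ the function k is differentiable with k'(ū) = sin(k(ū)) / ( ū (1 − cos(k(ū))) ). Hence k solves the DSW-fitting initial value problem dk/dū = Φ'''(ū) sin k / ( Φ''(ū)(1 − cos k) ), k(u₊) = 0, for the cubic potential Φ(u) = u³/3. -/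
open Real

/-- DSW fitting, harmonic edge: for `u₊ > 0`, the function
`k(ū) = arccos((2u₊ − ū)/ū)` satisfies `k(u₊) = 0`, `k(ū) ∈ (0, π)` for `ū > u₊`, and
`k'(ū) = sin(k(ū)) / (ū (1 − cos(k(ū))))` for `ū > u₊`; hence it solves the DSW-fitting
initial value problem `dk/dū = Φ'''(ū) sin k / (Φ''(ū)(1 − cos k))`, `k(u₊) = 0`, for
the cubic potential `Φ(u) = u³/3` (where `Φ''(ū) = 2ū`, `Φ'''(ū) = 2`). -/
theorem dsw_fitting_harmonic_edge (up : ℝ) (hup : 0 < up) (k : ℝ → ℝ)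
    (hk : k = fun ub => Real.arccos ((2 * up - ub) / ub)) :
    k up = 0
    ∧ (∀ ub : ℝ, up < ub → k ub ∈ Set.Ioo 0 π)
    ∧ (∀ ub : ℝ, up < ub →
        HasDerivAt k (Real.sin (k ub) / (ub * (1 - Real.cos (k ub)))) ub)
    ∧ (∀ ub : ℝ, up < ub →
        HasDerivAt k ((2 * Real.sin (k ub)) / ((2 * ub) * (1 - Real.cos (k ub)))) ub) := by
  subst hk
  have hbounds : ∀ ub : ℝ, up < ub →
      -1 < (2 * up - ub) / ub ∧ (2 * up - ub) / ub < 1 := by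
    intro ub hub
    have hub0 : 0 < ub := hup.trans hub
    constructor
    · rw [lt_div_iff₀ hub0]; nlinarith
    · rw [div_lt_one hub0]; linarith
  have hmem : ∀ ub : ℝ, up < ub →
      (fun ub => Real.arccos ((2 * up - ub) / ub)) ub ∈ Set.Ioo 0 π := by
    intro ub hub
    obtain ⟨hc1, hc2⟩ := hbounds ub hub
    refine ⟨Real.arccos_pos.2 hc2, ?_⟩
    unfold Real.arccos
    have := Real.neg_pi_div_two_lt_arcsin.2 hc1
    linarith
  have key : ∀ ub : ℝ, up < ub →
      HasDerivAt (fun ub => Real.arccos ((2 * up - ub) / ub))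
        (Real.sin (Real.arccos ((2 * up - ub) / ub)) /
          (ub * (1 - Real.cos (Real.arccos ((2 * up - ub) / ub))))) ub := by
    intro ub hub
    have hub0 : 0 < ub := hup.trans hub
    obtain ⟨hc1, hc2⟩ := hbounds ub hub
    set c : ℝ := (2 * up - ub) / ub with hc
    have hs : (0:ℝ) < 1 - c ^ 2 := by nlinarith
    have hsq : (0:ℝ) < Real.sqrt (1 - c ^ 2) := Real.sqrt_pos.2 hs
    have hsqsq : Real.sqrt (1 - c ^ 2) ^ 2 = 1 - c ^ 2 := Real.sq_sqrt hs.le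
    have hcub : c * ub = 2 * up - ub := by
      rw [hc]; field_simp
    have hinner : HasDerivAt (fun y : ℝ => (2 * up - y) / y)
        (((-1) * ub - (2 * up - ub) * 1) / ub ^ 2) ub :=
      HasDerivAt.div ((hasDerivAt_id ub).const_sub (2 * up)) (hasDerivAt_id ub) hub0.ne'
    have harc := (Real.hasDerivAt_arccos hc1.ne' hc2.ne).comp ub hinner
    refine harc.congr_deriv ?_
    symm
    rw [Real.sin_arccos, Real.cos_arccos hc1.le hc2.le]
    have h1c : (0:ℝ) < 1 - c := by linarith
    rw [div_eq_iff (by positivity : ub * (1 - c) ≠ 0)]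
    field_simp
    nlinarith [hsqsq, hcub, hsq, hub0]
  refine ⟨?_, hmem, key, ?_⟩
  · simp only
    have : (2 * up - up) / up = 1 := by field_simp; ring
    rw [this, Real.arccos_one]
  · intro ub hub
    have h := key ub hub
    convert h using 1
    set X := Real.arccos ((2 * up - ub) / ub)
    rw [show (2 * ub) * (1 - Real.cos X) = 2 * (ub * (1 - Real.cos X)) by ring,
      mul_div_mul_left _ _ (two_ne_zero)]
end

section
/- DSW fitting, soliton edge: fix u₋ > 0 and define k̃ : (0, u₋] → ℝ by k̃(ū) = arccosh( (2u₋ − ū)/ū ). Then k̃(u₋) = 0, k̃(ū) > 0 for 0 < ū < u₋, and for every ū ∈ (0, u₋) the function k̃ is differentiable with k̃'(ū) = sinh(k̃(ū)) / ( ū (1 − cosh(k̃(ū))) ). Moreover, 2 ū sinh(k̃(ū)) = 4 √( u₋ (u₋ − ū) ) for all ū ∈ (0, u₋], so that for 0 < u₊ < u₋ the soliton edge speed satisfies c₊ = Φ''(u₊) sinh(k̃(u₊)) / k̃(u₊) = 4 √( u₋ (u₋ − u₊) ) / arccosh( (2u₋ − u₊)/u₊ ). -/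
open Real

noncomputable def arcosh (x : ℝ) : ℝ := Real.log (x + Real.sqrt (x ^ 2 - 1))

lemma exp_arcosh {x : ℝ} (hx : 1 ≤ x) :
    Real.exp (_root_.arcosh x) = x + Real.sqrt (x ^ 2 - 1) ∧
    Real.exp (-(_root_.arcosh x)) = x - Real.sqrt (x ^ 2 - 1) := by
  have h0 : (0:ℝ) ≤ x ^ 2 - 1 := by nlinarith
  have hs2 : Real.sqrt (x ^ 2 - 1) ^ 2 = x ^ 2 - 1 := Real.sq_sqrt h0
  have hs0 : 0 ≤ Real.sqrt (x ^ 2 - 1) := Real.sqrt_nonneg _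
  have hpos : 0 < x + Real.sqrt (x ^ 2 - 1) := by linarith
  have he : Real.exp (_root_.arcosh x) = x + Real.sqrt (x ^ 2 - 1) := Real.exp_log hpos
  refine ⟨he, ?_⟩
  rw [Real.exp_neg, he, inv_eq_one_div, eq_comm, eq_div_iff hpos.ne']
  nlinarith
lemma cosh_arcosh {x : ℝ} (hx : 1 ≤ x) : Real.cosh (_root_.arcosh x) = x := by
  rw [Real.cosh_eq, (_root_.exp_arcosh hx).1, (_root_.exp_arcosh hx).2]; ring
lemma sinh_arcosh {x : ℝ} (hx : 1 ≤ x) : Real.sinh (_root_.arcosh x) = Real.sqrt (x ^ 2 - 1) := by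
  rw [Real.sinh_eq, (_root_.exp_arcosh hx).1, (_root_.exp_arcosh hx).2]; ring

/-- DSW fitting, soliton edge: for `u₋ > 0`, the function
`k̃(ū) = arcosh((2u₋ − ū)/ū)` satisfies `k̃(u₋) = 0`, `k̃(ū) > 0` for `0 < ū < u₋`, and
`k̃'(ū) = sinh(k̃(ū)) / (ū(1 − cosh(k̃(ū))))` for `ū ∈ (0, u₋)`.  Moreover
`2ū sinh(k̃(ū)) = 4√(u₋(u₋ − ū))` on `(0, u₋]`, so that for `0 < u₊ < u₋` the soliton
edge speed satisfies
`c₊ = Φ''(u₊) sinh(k̃(u₊))/k̃(u₊) = 4√(u₋(u₋ − u₊)) / arcosh((2u₋ − u₊)/u₊)`. -/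
theorem dsw_fitting_soliton_edge (um : ℝ) (hum : 0 < um) (kt : ℝ → ℝ)
    (hkt : kt = fun ub => _root_.arcosh ((2 * um - ub) / ub)) :
    kt um = 0
    ∧ (∀ ub : ℝ, 0 < ub → ub < um → 0 < kt ub)
    ∧ (∀ ub : ℝ, 0 < ub → ub < um →
        HasDerivAt kt (Real.sinh (kt ub) / (ub * (1 - Real.cosh (kt ub)))) ub)
    ∧ (∀ ub : ℝ, 0 < ub → ub ≤ um →
        2 * ub * Real.sinh (kt ub) = 4 * Real.sqrt (um * (um - ub)))
    ∧ (∀ up : ℝ, 0 < up → up < um →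
        (2 * up) * Real.sinh (kt up) / kt up
          = 4 * Real.sqrt (um * (um - up)) / _root_.arcosh ((2 * um - up) / up)) := by
  -- basic facts about x(ub) = (2um - ub)/ub
  have hx1 : ∀ ub : ℝ, 0 < ub → ub ≤ um → 1 ≤ (2 * um - ub) / ub := by
    intro ub hub hle
    rw [le_div_iff₀ hub]; linarith
  have hxgt : ∀ ub : ℝ, 0 < ub → ub < um → 1 < (2 * um - ub) / ub := by
    intro ub hub hlt
    rw [lt_div_iff₀ hub]; linarith
  have hS : ∀ ub : ℝ, 0 < ub → ub ≤ um →
      Real.sqrt (((2 * um - ub) / ub) ^ 2 - 1) = 2 * Real.sqrt (um * (um - ub)) / ub := by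
    intro ub hub hle
    have h1 : ((2 * um - ub) / ub) ^ 2 - 1 = (2 * Real.sqrt (um * (um - ub)) / ub) ^ 2 := by
      rw [div_pow, div_pow, mul_pow, Real.sq_sqrt (by nlinarith)]
      field_simp; ring
    rw [h1, Real.sqrt_sq (by positivity)]
  -- part 4
  have part4 : ∀ ub : ℝ, 0 < ub → ub ≤ um →
      2 * ub * Real.sinh (kt ub) = 4 * Real.sqrt (um * (um - ub)) := by
    intro ub hub hle
    rw [hkt]
    simp only
    rw [_root_.sinh_arcosh (hx1 ub hub hle), hS ub hub hle]
    field_simp; ring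
  refine ⟨?_, ?_, ?_, part4, ?_⟩
  · rw [hkt]
    simp only
    rw [show (2 * um - um) / um = 1 by rw [div_eq_one_iff_eq hum.ne']; ring]
    norm_num [_root_.arcosh]
  · intro ub hub hlt
    rw [hkt]
    simp only
    have h1 := hxgt ub hub hlt
    have hs0 : 0 ≤ Real.sqrt (((2 * um - ub) / ub) ^ 2 - 1) := Real.sqrt_nonneg _
    exact Real.log_pos (by linarith)
  · -- derivative
    intro ub hub hlt
    set x : ℝ := (2 * um - ub) / ub with hxdef
    have hx1' : 1 < x := hxgt ub hub hlt
    have hub' : ub ≠ 0 := hub.ne'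
    have hS2pos : 0 < x ^ 2 - 1 := by nlinarith
    set S : ℝ := Real.sqrt (um * (um - ub)) with hSdef
    have hSpos : 0 < S := Real.sqrt_pos.mpr (by nlinarith)
    have hS2 : S ^ 2 = um * (um - ub) := Real.sq_sqrt (by nlinarith)
    have hSval : Real.sqrt (x ^ 2 - 1) = 2 * S / ub := hS ub hub hlt.le
    -- derivative of inner rational function
    have hx' : HasDerivAt (fun u : ℝ => (2 * um - u) / u) (-(2 * um) / ub ^ 2) ub := by
      have h0 : HasDerivAt (fun u : ℝ => 2 * um - u) (-1) ub :=
        (hasDerivAt_id ub).const_sub (2 * um)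
      have := h0.div (hasDerivAt_id ub) hub'
      exact this.congr_deriv (by simp only [id]; ring)
    have hsq : HasDerivAt (fun u : ℝ => ((2 * um - u) / u) ^ 2 - 1)
        (2 * x * (-(2 * um) / ub ^ 2)) ub := by
      have := (hx'.pow 2).sub_const 1
      exact this.congr_deriv (by norm_num [hxdef])
    have hsqrt : HasDerivAt (fun u : ℝ => Real.sqrt (((2 * um - u) / u) ^ 2 - 1))
        (1 / (2 * Real.sqrt (x ^ 2 - 1)) * (2 * x * (-(2 * um) / ub ^ 2))) ub := by
      exact (Real.hasDerivAt_sqrt hS2pos.ne').comp ub hsq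
    have hinner := hx'.add hsqrt
    have hip : 0 < x + Real.sqrt (x ^ 2 - 1) := by
      have := Real.sqrt_nonneg (x ^ 2 - 1); linarith
    have hlog := (Real.hasDerivAt_log hip.ne').comp ub hinner
    rw [hkt]
    simp only
    rw [show _root_.arcosh ((2 * um - ub) / ub) = _root_.arcosh x from rfl,
      _root_.sinh_arcosh hx1'.le, _root_.cosh_arcosh hx1'.le, hSval]
    have hsne : Real.sqrt (x ^ 2 - 1) ≠ 0 := by rw [hSval]; positivity
    have e1 : (x + Real.sqrt (x ^ 2 - 1))⁻¹ * (-(2 * um) / ub ^ 2 +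
        1 / (2 * Real.sqrt (x ^ 2 - 1)) * (2 * x * (-(2 * um) / ub ^ 2)))
        = -(2 * um) / ub ^ 2 / Real.sqrt (x ^ 2 - 1) := by
      field_simp
      ring
    have h1x : 1 - x ≠ 0 := by linarith
    have e2 : -(2 * um) / ub ^ 2 / Real.sqrt (x ^ 2 - 1)
        = 2 * S / ub / (ub * (1 - x)) := by
      have hden1 : 1 - (2 * um - ub) / ub = (2 * ub - 2 * um) / ub := by
        field_simp
        ring
      have hnm : 2 * ub - 2 * um ≠ 0 := sub_ne_zero.mpr (by intro h; linarith)
      rw [hSval, hxdef, hden1]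
      field_simp
      rw [eq_div_iff (by intro h; linarith : ub - um ≠ 0)]
      linear_combination -hS2
    have heq : HasDerivAt (fun u : ℝ => Real.log ((2 * um - u) / u +
        Real.sqrt (((2 * um - u) / u) ^ 2 - 1)))
        (2 * S / ub / (ub * (1 - x))) ub := by
      exact hlog.congr_deriv (by rw [e1, e2])
    exact heq
  · intro up hup hlt
    have h4 := part4 up hup hlt.le
    rw [show 2 * up * Real.sinh (kt up) = (2 * up) * Real.sinh (kt up) from rfl] at h4
    rw [h4, hkt]
end

section
/- Riemann invariants of the weakly nonlinear modulation system: let u₀ > 0 be constant and let a, k : ℝ × (0, ∞) → ℝ be continuously differentiable with a(x,t) > 0 and 0 < k(x,t) < π for all (x,t), satisfying ∂_t(a²) + ∂_x( 2u₀ cos(k) · a² ) = 0 and ∂_t k + ∂_x( 2u₀ sin k ) + ω̃₂(k) ∂_x(a²) = 0, where ω̃₂(k) = (cos k − 2) cot(k/2) / (16 u₀). Then the functions r_± = a ∓ 2√2 u₀ arccos( (−1 + 2 cos k)/3 ) satisfy the diagonal transport equations ∂_t r_± + λ_± ∂_x r_± = 0 with characteristic speeds λ_± = 2u₀ cos k ±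 (a/2) cos(k/2) √(2 − cos k). -/
set_option maxHeartbeats 1000000


open Real

/-- Riemann invariants of the weakly nonlinear modulation system: if `a > 0` and
`0 < k < π` solve `(a²)_t + (2u₀ cos k · a²)_x = 0` and
`k_t + (2u₀ sin k)_x + ω̃₂(k)(a²)_x = 0` with
`ω̃₂(k) = (cos k − 2) cot(k/2)/(16u₀)`, then
`r_± = a ∓ 2√2 u₀ arccos((−1 + 2cos k)/3)` satisfy `∂_t r_± + λ_± ∂_x r_± = 0` with
`λ_± = 2u₀ cos k ± (a/2) cos(k/2) √(2 − cos k)`. -/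
theorem riemann_invariants_weakly_nonlinear_modulation (u₀ : ℝ) (hu₀ : 0 < u₀)
    (a k : ℝ → ℝ → ℝ)
    (ha : ContDiffOn ℝ 1 (fun p : ℝ × ℝ => a p.1 p.2) (Set.univ ×ˢ Set.Ioi 0))
    (hk : ContDiffOn ℝ 1 (fun p : ℝ × ℝ => k p.1 p.2) (Set.univ ×ˢ Set.Ioi 0))
    (hapos : ∀ (x t : ℝ), 0 < t → 0 < a x t)
    (hkrange : ∀ (x t : ℝ), 0 < t → 0 < k x t ∧ k x t < π)
    (heq1 : ∀ (x t : ℝ), 0 < t →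
      deriv (fun s => (a x s) ^ 2) t
        + deriv (fun y => 2 * u₀ * Real.cos (k y t) * (a y t) ^ 2) x = 0)
    (heq2 : ∀ (x t : ℝ), 0 < t →
      deriv (fun s => k x s) t
        + deriv (fun y => 2 * u₀ * Real.sin (k y t)) x
        + ((Real.cos (k x t) - 2) * (Real.cos (k x t / 2) / Real.sin (k x t / 2))
            / (16 * u₀)) * deriv (fun y => (a y t) ^ 2) x = 0) :
    ∀ (x t : ℝ), 0 < t →
      (deriv (fun s => a x s
            - 2 * Real.sqrt 2 * u₀ * Real.arccos ((-1 + 2 * Real.cos (k x s)) / 3)) t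
        + (2 * u₀ * Real.cos (k x t)
            + (a x t / 2) * Real.cos (k x t / 2) * Real.sqrt (2 - Real.cos (k x t)))
          * deriv (fun y => a y t
            - 2 * Real.sqrt 2 * u₀ * Real.arccos ((-1 + 2 * Real.cos (k y t)) / 3)) x = 0)
      ∧ (deriv (fun s => a x s
            + 2 * Real.sqrt 2 * u₀ * Real.arccos ((-1 + 2 * Real.cos (k x s)) / 3)) t
        + (2 * u₀ * Real.cos (k x t)
            - (a x t / 2) * Real.cos (k x t / 2) * Real.sqrt (2 - Real.cos (k x t)))
          * deriv (fun y => a y t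
            + 2 * Real.sqrt 2 * u₀ * Real.arccos ((-1 + 2 * Real.cos (k y t)) / 3)) x = 0) := by
  intro x t ht
  have hA0 : 0 < a x t := hapos x t ht
  obtain ⟨hK0, hKπ⟩ := hkrange x t ht
  have hopen : IsOpen ((Set.univ : Set ℝ) ×ˢ Set.Ioi (0:ℝ)) := isOpen_univ.prod isOpen_Ioi
  have hmem : ((x, t) : ℝ × ℝ) ∈ (Set.univ : Set ℝ) ×ˢ Set.Ioi (0:ℝ) := ⟨trivial, ht⟩
  have hda : DifferentiableAt ℝ (fun p : ℝ × ℝ => a p.1 p.2) (x, t) :=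
    ((ha.differentiableOn one_ne_zero) (x, t) hmem).differentiableAt (hopen.mem_nhds hmem)
  have hdk : DifferentiableAt ℝ (fun p : ℝ × ℝ => k p.1 p.2) (x, t) :=
    ((hk.differentiableOn one_ne_zero) (x, t) hmem).differentiableAt (hopen.mem_nhds hmem)
  have haX : DifferentiableAt ℝ (fun y => a y t) x :=
    by have h := hda.comp x (differentiableAt_id.prodMk (differentiableAt_const t) : DifferentiableAt ℝ (fun y : ℝ => (y, t)) x); exact h
  have haT : DifferentiableAt ℝ (fun s => a x s) t :=
    by have h := hda.comp t ((differentiableAt_const x).prodMk differentiableAt_id : DifferentiableAt ℝ (fun s : ℝ => (x, s)) t); exact h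
  have hkX : DifferentiableAt ℝ (fun y => k y t) x :=
    by have h := hdk.comp x (differentiableAt_id.prodMk (differentiableAt_const t) : DifferentiableAt ℝ (fun y : ℝ => (y, t)) x); exact h
  have hkT : DifferentiableAt ℝ (fun s => k x s) t :=
    by have h := hdk.comp t ((differentiableAt_const x).prodMk differentiableAt_id : DifferentiableAt ℝ (fun s : ℝ => (x, s)) t); exact h
  -- trig facts
  have hπ := Real.pi_pos
  have hsh : 0 < Real.sin (k x t / 2) :=
    Real.sin_pos_of_pos_of_lt_pi (by linarith) (by linarith)
  have hch : 0 < Real.cos (k x t / 2) :=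
    Real.cos_pos_of_mem_Ioo ⟨by linarith, by linarith⟩
  have hsK : 0 < Real.sin (k x t) := Real.sin_pos_of_pos_of_lt_pi hK0 hKπ
  have hpyth := Real.sin_sq_add_cos_sq (k x t)
  have hcK1 : Real.cos (k x t) < 1 := by nlinarith
  have hcKm1 : -1 < Real.cos (k x t) := by nlinarith
  have h2c : 0 < 2 - Real.cos (k x t) := by linarith
  have hs2 : 0 < Real.sqrt (2 - Real.cos (k x t)) := Real.sqrt_pos.mpr h2c
  have hsq : Real.sqrt (2 - Real.cos (k x t)) ^ 2 = 2 - Real.cos (k x t) :=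
    Real.sq_sqrt h2c.le
  have hch2 : Real.cos (k x t / 2) ^ 2 = 1 / 2 + Real.cos (k x t) / 2 := by
    have h := Real.cos_sq (k x t / 2)
    rwa [show 2 * (k x t / 2) = k x t by ring] at h
  have hKsin : Real.sin (k x t) = 2 * Real.sin (k x t / 2) * Real.cos (k x t / 2) := by
    have h := Real.sin_two_mul (k x t / 2)
    rw [show 2 * (k x t / 2) = k x t by ring] at h
    linarith
  have hr2 : (0:ℝ) < Real.sqrt 2 := Real.sqrt_pos.mpr (by norm_num)
  have h2 : Real.sqrt 2 ^ 2 = 2 := Real.sq_sqrt (by norm_num)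
  -- the argument of arccos
  have hvlt : ((-1 + 2 * Real.cos (k x t)) / 3 : ℝ) < 1 := by linarith
  have hvgt : (-1 : ℝ) < (-1 + 2 * Real.cos (k x t)) / 3 := by linarith
  have hwsq : 1 - ((-1 + 2 * Real.cos (k x t)) / 3) ^ 2
      = (2 * Real.sqrt 2 * Real.cos (k x t / 2) * Real.sqrt (2 - Real.cos (k x t)) / 3) ^ 2 := by
    linear_combination
      (-(4 * Real.cos (k x t / 2) ^ 2 * Real.sqrt (2 - Real.cos (k x t)) ^ 2) / 9) * h2
      + (-(8 / 9) * Real.sqrt (2 - Real.cos (k x t)) ^ 2) * hch2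
      + (-(4 / 9) * (1 + Real.cos (k x t))) * hsq
  have hwpos : (0:ℝ) ≤ 2 * Real.sqrt 2 * Real.cos (k x t / 2) * Real.sqrt (2 - Real.cos (k x t)) / 3 := by
    apply div_nonneg _ (by norm_num)
    exact mul_nonneg (mul_nonneg (by positivity) hch.le) (Real.sqrt_nonneg _)
  have hw : Real.sqrt (1 - ((-1 + 2 * Real.cos (k x t)) / 3) ^ 2)
      = 2 * Real.sqrt 2 * Real.cos (k x t / 2) * Real.sqrt (2 - Real.cos (k x t)) / 3 := by
    rw [hwsq]
    exact Real.sqrt_sq hwpos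
  have harc : HasDerivAt Real.arccos
      (-(1 / Real.sqrt (1 - ((-1 + 2 * Real.cos (k x t)) / 3) ^ 2)))
      ((-1 + 2 * Real.cos (k x t)) / 3) :=
    Real.hasDerivAt_arccos (ne_of_gt hvgt) (ne_of_lt hvlt)
  -- inner derivatives
  have hvT : HasDerivAt (fun s => (-1 + 2 * Real.cos (k x s)) / 3)
      ((2 * (-Real.sin (k x t) * deriv (fun s => k x s) t)) / 3) t :=
    ((hkT.hasDerivAt.cos.const_mul 2).const_add (-1)).div_const 3
  have hvX : HasDerivAt (fun y => (-1 + 2 * Real.cos (k y t)) / 3)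
      ((2 * (-Real.sin (k x t) * deriv (fun y => k y t) x)) / 3) x :=
    ((hkX.hasDerivAt.cos.const_mul 2).const_add (-1)).div_const 3
  have harcT : HasDerivAt (fun s => Real.arccos ((-1 + 2 * Real.cos (k x s)) / 3))
      (-(1 / Real.sqrt (1 - ((-1 + 2 * Real.cos (k x t)) / 3) ^ 2))
        * ((2 * (-Real.sin (k x t) * deriv (fun s => k x s) t)) / 3)) t :=
    harc.comp (h₂ := Real.arccos) (h := fun s => (-1 + 2 * Real.cos (k x s)) / 3) t hvT
  have harcX : HasDerivAt (fun y => Real.arccos ((-1 + 2 * Real.cos (k y t)) / 3))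
      (-(1 / Real.sqrt (1 - ((-1 + 2 * Real.cos (k x t)) / 3) ^ 2))
        * ((2 * (-Real.sin (k x t) * deriv (fun y => k y t) x)) / 3)) x :=
    harc.comp (h₂ := Real.arccos) (h := fun y => (-1 + 2 * Real.cos (k y t)) / 3) x hvX
  -- clean derivative values for r∓
  have hDTm : HasDerivAt
      (fun s => a x s - 2 * Real.sqrt 2 * u₀ * Real.arccos ((-1 + 2 * Real.cos (k x s)) / 3))
      (deriv (fun s => a x s) t
        - (4 * u₀ * Real.sin (k x t / 2) / Real.sqrt (2 - Real.cos (k x t)))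
          * deriv (fun s => k x s) t) t := by
    have h := haT.hasDerivAt.fun_sub (harcT.const_mul (2 * Real.sqrt 2 * u₀))
    refine h.congr_deriv ?_
    symm
    rw [hw, hKsin]
    field_simp
    ring
  have hDXm : HasDerivAt
      (fun y => a y t - 2 * Real.sqrt 2 * u₀ * Real.arccos ((-1 + 2 * Real.cos (k y t)) / 3))
      (deriv (fun y => a y t) x
        - (4 * u₀ * Real.sin (k x t / 2) / Real.sqrt (2 - Real.cos (k x t)))
          * deriv (fun y => k y t) x) x := by
    have h := haX.hasDerivAt.fun_sub (harcX.const_mul (2 * Real.sqrt 2 * u₀))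
    refine h.congr_deriv ?_
    symm
    rw [hw, hKsin]
    field_simp
    ring
  have hDTp : HasDerivAt
      (fun s => a x s + 2 * Real.sqrt 2 * u₀ * Real.arccos ((-1 + 2 * Real.cos (k x s)) / 3))
      (deriv (fun s => a x s) t
        + (4 * u₀ * Real.sin (k x t / 2) / Real.sqrt (2 - Real.cos (k x t)))
          * deriv (fun s => k x s) t) t := by
    have h := haT.hasDerivAt.fun_add (harcT.const_mul (2 * Real.sqrt 2 * u₀))
    refine h.congr_deriv ?_
    symm
    rw [hw, hKsin]
    field_simp
    ring
  have hDXp : HasDerivAt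
      (fun y => a y t + 2 * Real.sqrt 2 * u₀ * Real.arccos ((-1 + 2 * Real.cos (k y t)) / 3))
      (deriv (fun y => a y t) x
        + (4 * u₀ * Real.sin (k x t / 2) / Real.sqrt (2 - Real.cos (k x t)))
          * deriv (fun y => k y t) x) x := by
    have h := haX.hasDerivAt.fun_add (harcX.const_mul (2 * Real.sqrt 2 * u₀))
    refine h.congr_deriv ?_
    symm
    rw [hw, hKsin]
    field_simp
    ring
  -- rewrite the PDE hypotheses
  have h1 := heq1 x t ht
  have h2' := heq2 x t ht
  have hd1 : deriv (fun s => (a x s) ^ 2) t = 2 * a x t * deriv (fun s => a x s) t := by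
    have h := (haT.hasDerivAt.fun_pow 2).deriv
    simpa using h
  have hd2 : deriv (fun y => 2 * u₀ * Real.cos (k y t) * (a y t) ^ 2) x
      = 2 * u₀ * (-Real.sin (k x t) * deriv (fun y => k y t) x) * (a x t) ^ 2
        + 2 * u₀ * Real.cos (k x t) * (2 * a x t * deriv (fun y => a y t) x) := by
    have h := ((hkX.hasDerivAt.cos.const_mul (2 * u₀)).fun_mul (haX.hasDerivAt.fun_pow 2)).deriv
    simpa using h
  have hd3 : deriv (fun y => 2 * u₀ * Real.sin (k y t)) x
      = 2 * u₀ * (Real.cos (k x t) * deriv (fun y => k y t) x) := by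
    have h := (hkX.hasDerivAt.sin.const_mul (2 * u₀)).deriv
    simpa using h
  have hd4 : deriv (fun y => (a y t) ^ 2) x = 2 * a x t * deriv (fun y => a y t) x := by
    have h := (haX.hasDerivAt.fun_pow 2).deriv
    simpa using h
  rw [hd1, hd2] at h1
  rw [hd3, hd4] at h2'
  -- solved forms of the PDEs
  have E1 : deriv (fun s => a x s) t
      = u₀ * (2 * Real.sin (k x t / 2) * Real.cos (k x t / 2)) * a x t
          * deriv (fun y => k y t) x
        - 2 * u₀ * Real.cos (k x t) * deriv (fun y => a y t) x := by
    apply mul_left_cancel₀ (mul_ne_zero two_ne_zero hA0.ne')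
    linear_combination h1 + (2 * u₀ * (a x t) ^ 2 * deriv (fun y => k y t) x) * hKsin
  have E2 : deriv (fun s => k x s) t
      = -(2 * u₀ * Real.cos (k x t) * deriv (fun y => k y t) x)
        + (Real.sqrt (2 - Real.cos (k x t)) ^ 2 * Real.cos (k x t / 2) * a x t
            * deriv (fun y => a y t) x) / (8 * u₀ * Real.sin (k x t / 2)) := by
    have hhelp : ((Real.cos (k x t) - 2) * (Real.cos (k x t / 2) / Real.sin (k x t / 2))
          / (16 * u₀)) * (2 * a x t * deriv (fun y => a y t) x)
        = -((Real.sqrt (2 - Real.cos (k x t)) ^ 2 * Real.cos (k x t / 2) * a x t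
            * deriv (fun y => a y t) x) / (8 * u₀ * Real.sin (k x t / 2))) := by
      rw [hsq]
      field_simp
      ring
    linarith [h2', hhelp]
  constructor
  · rw [hDTm.deriv, hDXm.deriv, E1, E2]
    field_simp [hu₀.ne', hsh.ne', hs2.ne']
    ring
  · rw [hDTp.deriv, hDXp.deriv, E1, E2]
    field_simp [hu₀.ne', hsh.ne', hs2.ne']
    ring
end

section
/- Weakly nonlinear expansion of the DSW leading-edge amplitude: the function a₊(u₊) = 6√(1 − u₊) / arccosh( (2 − u₊)/u₊ ) − 3u₊, defined for 0 < u₊ < 1, satisfies a₊(1 − Δ) = 2Δ − (4/15)Δ² + O(Δ³) as Δ → 0⁺. -/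
open Filter Asymptotics

lemma arcosh_eq (t : ℝ) (ht : 0 < t) (ht1 : t < 1) :
    arcosh ((1 + t ^ 2) / (1 - t ^ 2)) = Real.log ((1 + t) / (1 - t)) := by
  have h1 : (0:ℝ) < 1 - t ^ 2 := by nlinarith
  have hsq : ((1 + t ^ 2) / (1 - t ^ 2)) ^ 2 - 1 = (2 * t / (1 - t ^ 2)) ^ 2 := by
    field_simp
    ring
  unfold arcosh
  rw [hsq, Real.sqrt_sq (by positivity)]
  congr 1
  have h2 : (0:ℝ) < 1 - t := by linarith
  field_simp
  ring

set_option maxHeartbeats 1000000 in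
lemma key_bound (Δ : ℝ) (h0 : 0 < Δ) (h1 : Δ ≤ 1/4) :
    |(6 * Real.sqrt Δ / arcosh ((1 + Δ) / (1 - Δ)) - 3 * (1 - Δ))
        - (2 * Δ - (4 / 15) * Δ ^ 2)| ≤ 7 * Δ ^ 3 := by
  set t := Real.sqrt Δ with htdef
  have ht0 : 0 < t := Real.sqrt_pos.mpr h0
  have ht2 : t ^ 2 = Δ := Real.sq_sqrt h0.le
  have ht12 : t ≤ 1/2 := by
    nlinarith [ht2, ht0]
  have ht1 : t < 1 := by linarith
  have hA : arcosh ((1 + Δ) / (1 - Δ)) = Real.log ((1 + t) / (1 - t)) := by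
    rw [← ht2]; exact arcosh_eq t ht0 ht1
  set A := Real.log ((1 + t) / (1 - t)) with hAdef
  -- log expansion
  have habs : |t| < 1 := by rw [abs_of_pos ht0]; exact ht1
  have habs' : |(-t)| < 1 := by rwa [abs_neg]
  have e1 := Real.abs_log_sub_add_sum_range_le habs 6
  have e2 := Real.abs_log_sub_add_sum_range_le habs' 6
  have hsum1 : ∑ i ∈ Finset.range 6, t ^ (i + 1) / ((i:ℝ) + 1)
      = t + t^2/2 + t^3/3 + t^4/4 + t^5/5 + t^6/6 := by
    simp [Finset.sum_range_succ]
    norm_num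
  have hsum2 : ∑ i ∈ Finset.range 6, (-t) ^ (i + 1) / ((i:ℝ) + 1)
      = -t + t^2/2 - t^3/3 + t^4/4 - t^5/5 + t^6/6 := by
    simp [Finset.sum_range_succ]
    norm_num
    ring
  rw [hsum1, abs_of_pos ht0] at e1
  rw [hsum2, abs_neg, abs_of_pos ht0] at e2
  have h1mt : (1:ℝ)/2 ≤ 1 - t := by linarith
  have hbound : t ^ 7 / (1 - t) ≤ 2 * t ^ 7 := by
    rw [div_le_iff₀ (by linarith)]
    nlinarith [pow_pos ht0 7]
  have e1' : |t + t^2/2 + t^3/3 + t^4/4 + t^5/5 + t^6/6 + Real.log (1 - t)| ≤ 2 * t ^ 7 :=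
    e1.trans hbound
  have e2' : |-t + t^2/2 - t^3/3 + t^4/4 - t^5/5 + t^6/6 + Real.log (1 + t)| ≤ 2 * t ^ 7 := by
    have : (1:ℝ) - -t = 1 + t := by ring
    rw [this] at e2
    exact e2.trans hbound
  have hAlog : A = Real.log (1 + t) - Real.log (1 - t) := by
    rw [hAdef, Real.log_div (by linarith) (by linarith)]
  -- |A - 2S| ≤ 4 t^7 where S = t + t^3/3 + t^5/5
  have hAS : |A - 2 * (t + t^3/3 + t^5/5)| ≤ 4 * t ^ 7 := by
    rw [hAlog]
    have := abs_sub (-t + t^2/2 - t^3/3 + t^4/4 - t^5/5 + t^6/6 + Real.log (1 + t))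
      (t + t^2/2 + t^3/3 + t^4/4 + t^5/5 + t^6/6 + Real.log (1 - t))
    calc |Real.log (1 + t) - Real.log (1 - t) - 2 * (t + t^3/3 + t^5/5)|
        = |(-t + t^2/2 - t^3/3 + t^4/4 - t^5/5 + t^6/6 + Real.log (1 + t))
            - (t + t^2/2 + t^3/3 + t^4/4 + t^5/5 + t^6/6 + Real.log (1 - t))| := by
          ring_nf
      _ ≤ |-t + t^2/2 - t^3/3 + t^4/4 - t^5/5 + t^6/6 + Real.log (1 + t)|
            + |t + t^2/2 + t^3/3 + t^4/4 + t^5/5 + t^6/6 + Real.log (1 - t)| :=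
          abs_sub _ _
      _ ≤ 2 * t ^ 7 + 2 * t ^ 7 := add_le_add e2' e1'
      _ = 4 * t ^ 7 := by ring
  -- A ≥ 2t
  have hAlow : 2 * t ≤ A := by
    have h := abs_le.mp hAS
    nlinarith [pow_pos ht0 3, pow_pos ht0 5, pow_pos ht0 7, h.1]
  have hApos : 0 < A := lt_of_lt_of_le (by linarith) hAlow
  -- main estimate
  have hP : |3 - t^2 - (4/15) * t^4| ≤ 3 := by
    have h2 : t^2 ≤ (1/2:ℝ)^2 := pow_le_pow_left₀ ht0.le ht12 2
    have h4 : t^4 ≤ (1/2:ℝ)^4 := pow_le_pow_left₀ ht0.le ht12 4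
    norm_num at h2 h4
    rw [abs_le]
    constructor <;> [nlinarith; nlinarith]
  have hnum : |6 * t - (3 - t^2 - (4/15) * t^4) * A| ≤ 13 * t ^ 7 := by
    have step : 6 * t - (3 - t^2 - (4/15) * t^4) * A
        = ((26/45) * t^7 + (8/75) * t^9)
          - (3 - t^2 - (4/15) * t^4) * (A - 2 * (t + t^3/3 + t^5/5)) := by
      ring
    rw [step]
    calc |((26/45) * t^7 + (8/75) * t^9)
          - (3 - t^2 - (4/15) * t^4) * (A - 2 * (t + t^3/3 + t^5/5))|
        ≤ |(26/45) * t^7 + (8/75) * t^9|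
          + |3 - t^2 - (4/15) * t^4| * |A - 2 * (t + t^3/3 + t^5/5)| := by
          rw [← abs_mul]; exact abs_sub _ _
      _ ≤ t ^ 7 + 3 * (4 * t ^ 7) := by
          refine add_le_add ?_ ?_
          · rw [abs_of_pos (by positivity)]
            nlinarith [pow_pos ht0 7, pow_pos ht0 9]
          · exact mul_le_mul hP hAS (abs_nonneg _) (by norm_num)
      _ = 13 * t ^ 7 := by ring
  have hexpr : (6 * Real.sqrt Δ / arcosh ((1 + Δ) / (1 - Δ)) - 3 * (1 - Δ))
        - (2 * Δ - (4 / 15) * Δ ^ 2)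
      = (6 * t - (3 - t^2 - (4/15) * t^4) * A) / A := by
    rw [hA, ← htdef, ← ht2]
    field_simp
    ring
  rw [hexpr, abs_div, abs_of_pos hApos]
  rw [div_le_iff₀ hApos]
  calc |6 * t - (3 - t^2 - (4/15) * t^4) * A| ≤ 13 * t ^ 7 := hnum
    _ = (13/2) * t ^ 6 * (2 * t) := by ring
    _ ≤ 7 * Δ ^ 3 * A := by
        have h6 : t ^ 6 = Δ ^ 3 := by rw [← ht2]; ring
        rw [h6]
        have hΔ3 : 0 < Δ ^ 3 := by positivity
        nlinarith [mul_le_mul_of_nonneg_left hAlow (le_of_lt hΔ3)]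

/-- Weakly nonlinear expansion of the DSW leading-edge amplitude: the function
`a₊(u₊) = 6√(1 − u₊)/arcosh((2 − u₊)/u₊) − 3u₊`, defined for `0 < u₊ < 1`, satisfies
`a₊(1 − Δ) = 2Δ − (4/15)Δ² + O(Δ³)` as `Δ → 0⁺`. -/
theorem dsw_leading_edge_amplitude_expansion :
    (fun Δ : ℝ =>
        (6 * Real.sqrt (1 - (1 - Δ)) / arcosh ((2 - (1 - Δ)) / (1 - Δ)) - 3 * (1 - Δ))
          - (2 * Δ - (4 / 15) * Δ ^ 2))
      =O[nhdsWithin 0 (Set.Ioi 0)] (fun Δ : ℝ => Δ ^ 3) := by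
  rw [isBigO_iff]
  refine ⟨7, ?_⟩
  filter_upwards [Ioo_mem_nhdsGT_of_mem (by norm_num : (0:ℝ) ∈ Set.Ico 0 (1/4))]
    with Δ hΔ
  have h0 : 0 < Δ := hΔ.1
  have h1 : Δ ≤ 1/4 := hΔ.2.le
  have := key_bound Δ h0 h1
  have harg : (2 - (1 - Δ)) / (1 - Δ) = (1 + Δ) / (1 - Δ) := by ring_nf
  have hs : (1:ℝ) - (1 - Δ) = Δ := by ring
  rw [harg, hs, Real.norm_eq_abs, Real.norm_eq_abs, abs_of_pos (pow_pos h0 3)]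
  exact this
end
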